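/- arXiv:2012.04415 — 2 statements merged into one kernel-verified Lean document; each statement's English description precedes it below -/
import Mathlib

section
/- Let V be a finite-dimensional vector space with nondegenerate symmetric bilinear form Q, W a finite-dimensional vector space, θ : W → V a linear map, and ψ : V → W* the map ψ(v)(w) = Q(θ(w), v). If the sequence W → V → W* is exact at V (i.e., range θ = ker ψ), then range θ is a maximal isotropic subspace of V with respect to Q. -/
/-- If `W →θ V →ψ W*` with `ψ v = (w ↦ Q(θ w, v))` is exact at `V`, then `range θ` is a
maximal isotropic subspace of `V` with respect to `Q`. -/
theorem stmt3 {K V W : Type*} [Field K]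
    [AddCommGroup V] [Module K V] [FiniteDimensional K V]
    [AddCommGroup W] [Module K W] [FiniteDimensional K W]
    (Q : LinearMap.BilinForm K V) (hQ : Q.Nondegenerate)
    (hsymm : ∀ x y, Q x y = Q y x)
    (θ : W →ₗ[K] V)
    (hexact : LinearMap.range θ = LinearMap.ker (θ.dualMap ∘ₗ Q.flip)) :
    (∀ x ∈ LinearMap.range θ, ∀ y ∈ LinearMap.range θ, Q x y = 0) ∧
      (∀ U' : Submodule K V, LinearMap.range θ ≤ U' →
        (∀ x ∈ U', ∀ y ∈ U', Q x y = 0) → U' = LinearMap.range θ) := by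
  have hker : ∀ v : V, v ∈ LinearMap.ker (θ.dualMap ∘ₗ Q.flip) ↔ ∀ w : W, Q (θ w) v = 0 := by
    intro v
    constructor
    · intro h w
      have := congrArg (fun f => f w) (LinearMap.mem_ker.mp h)
      simpa [LinearMap.dualMap_apply] using this
    · intro h
      apply LinearMap.mem_ker.mpr
      ext w
      simpa [LinearMap.dualMap_apply] using h w
  constructor
  · rintro x ⟨a, rfl⟩ y ⟨b, rfl⟩
    have hb : θ b ∈ LinearMap.ker (θ.dualMap ∘ₗ Q.flip) := hexact ▸ LinearMap.mem_range_self θ b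
    exact (hker (θ b)).mp hb a
  · intro U' hle hiso
    refine le_antisymm (fun u hu => ?_) hle
    rw [hexact, hker]
    intro w
    exact hiso (θ w) (hle (LinearMap.mem_range_self θ w)) u hu
end

section
/- Consider an exact sequence of finite-dimensional vector spaces 0 → A₁ → B₁ → C₀ → A₂ →θ B₂ →ψ C₁ → A₃ → B₃ → C₂ → 0 in which there are isomorphisms Aᵢ ≅ C_{3-i}* for i = 1, 2, 3 and B₂ carries a nondegenerate symmetric bilinear form identifying B₂ ≅ B₂* compatibly, such that range θ = ker ψ and ψ is the composite of B₂ ≅ B₂* with θ* : B₂* → A₂* ≅ C₁. Then dim B₂ is even and dim B₂ = 2·dim(range θ). -/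
/-- For a self-dual exact sequence
`0 → A₁ → B₁ → C₀ → A₂ →θ B₂ →ψ C₁ → A₃ → B₃ → C₂ → 0`
with `Aᵢ ≅ C₍₃₋ᵢ₎*` and `B₂` carrying a nondegenerate symmetric bilinear form `Q`
identifying `ψ` with the dual of `θ`, the dimension of `B₂` is even and equals
`2 · dim (range θ)`. -/
theorem stmt14 {K A₁ B₁ C₀ A₂ B₂ C₁ A₃ B₃ C₂ : Type*} [Field K]
    [AddCommGroup A₁] [Module K A₁] [FiniteDimensional K A₁]
    [AddCommGroup B₁] [Module K B₁] [FiniteDimensional K B₁]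
    [AddCommGroup C₀] [Module K C₀] [FiniteDimensional K C₀]
    [AddCommGroup A₂] [Module K A₂] [FiniteDimensional K A₂]
    [AddCommGroup B₂] [Module K B₂] [FiniteDimensional K B₂]
    [AddCommGroup C₁] [Module K C₁] [FiniteDimensional K C₁]
    [AddCommGroup A₃] [Module K A₃] [FiniteDimensional K A₃]
    [AddCommGroup B₃] [Module K B₃] [FiniteDimensional K B₃]
    [AddCommGroup C₂] [Module K C₂] [FiniteDimensional K C₂]
    (f₁ : A₁ →ₗ[K] B₁) (f₂ : B₁ →ₗ[K] C₀) (f₃ : C₀ →ₗ[K] A₂)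
    (θ : A₂ →ₗ[K] B₂) (ψ : B₂ →ₗ[K] C₁)
    (f₆ : C₁ →ₗ[K] A₃) (f₇ : A₃ →ₗ[K] B₃) (f₈ : B₃ →ₗ[K] C₂)
    -- exactness of the ten-term sequence
    (hinj : Function.Injective f₁)
    (hex₁ : LinearMap.range f₁ = LinearMap.ker f₂)
    (hex₂ : LinearMap.range f₂ = LinearMap.ker f₃)
    (hex₃ : LinearMap.range f₃ = LinearMap.ker θ)
    (hex₄ : LinearMap.range θ = LinearMap.ker ψ)
    (hex₅ : LinearMap.range ψ = LinearMap.ker f₆)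
    (hex₆ : LinearMap.range f₆ = LinearMap.ker f₇)
    (hex₇ : LinearMap.range f₇ = LinearMap.ker f₈)
    (hsurj : Function.Surjective f₈)
    -- dualities `Aᵢ ≅ C₍₃₋ᵢ₎*`
    (e₁ : A₁ ≃ₗ[K] Module.Dual K C₂)
    (e₂ : A₂ ≃ₗ[K] Module.Dual K C₁)
    (e₃ : A₃ ≃ₗ[K] Module.Dual K C₀)
    -- nondegenerate symmetric bilinear form on `B₂` compatible with `ψ` being `θ*`
    (Q : LinearMap.BilinForm K B₂) (hQ : Q.Nondegenerate)
    (hsymm : ∀ x y, Q x y = Q y x)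
    (hψ : ∀ (b : B₂) (a : A₂), e₂ a (ψ b) = Q (θ a) b) :
    Even (Module.finrank K B₂) ∧
      Module.finrank K B₂ = 2 * Module.finrank K (LinearMap.range θ) := by
  have hcomp : ψ.dualMap.comp e₂.toLinearMap = (LinearMap.comp (Q : B₂ →ₗ[K] Module.Dual K B₂) θ) := by
    ext a b
    exact hψ b a
  have hrd : Module.finrank K (LinearMap.range ψ.dualMap) =
      Module.finrank K (LinearMap.range ψ) :=
    LinearMap.finrank_range_dualMap_eq_finrank_range ψ
  have h1 : LinearMap.range (ψ.dualMap.comp e₂.toLinearMap) = LinearMap.range ψ.dualMap := by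
    rw [LinearMap.range_comp_of_range_eq_top _ e₂.range]
  have hQker : LinearMap.ker (Q : B₂ →ₗ[K] Module.Dual K B₂) = ⊥ :=
    LinearMap.BilinForm.nondegenerate_iff_ker_eq_bot.mp hQ
  have h2 : LinearMap.ker ((LinearMap.comp (Q : B₂ →ₗ[K] Module.Dual K B₂) θ)) = LinearMap.ker θ :=
    LinearMap.ker_comp_of_ker_eq_bot θ hQker
  have h3 : LinearMap.ker (ψ.dualMap.comp e₂.toLinearMap) = LinearMap.ker θ := by
    rw [hcomp, h2]
  -- rank of θ equals rank of ψ
  have hrn₁ := LinearMap.finrank_range_add_finrank_ker (ψ.dualMap.comp e₂.toLinearMap)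
  have hrn₂ := LinearMap.finrank_range_add_finrank_ker θ
  rw [h1, h3, hrd] at hrn₁
  have hrankeq : Module.finrank K (LinearMap.range ψ) = Module.finrank K (LinearMap.range θ) := by
    omega
  have hB := LinearMap.finrank_range_add_finrank_ker ψ
  rw [← hex₄] at hB
  rw [hrankeq] at hB
  constructor
  · exact ⟨Module.finrank K (LinearMap.range θ), by omega⟩
  · omega
end
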